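/- Let p be a minimal element of a finite poset P, and suppose that for some fixed k, every maximal antichain k-family of P covers p. Then for every k' ≥ k, every maximal antichain k'-family of P covers p. -/
import Mathlib


open Finset

/-- `cMax α k` is the maximal cardinality of a union of `k` pairwise disjoint chains
in the finite poset `α`. -/
noncomputable def cMax (α : Type*) [PartialOrder α] [Fintype α] [DecidableEq α] (k : ℕ) : ℕ :=
  sSup {n : ℕ | ∃ f : Fin k → Finset α,
    (∀ i, IsChain (· ≤ ·) (↑(f i) : Set α)) ∧
    Pairwise (Function.onFun Disjoint f) ∧
    n = (Finset.univ.biUnion f).card}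

/-- `aMax α k` is the maximal cardinality of a union of `k` pairwise disjoint antichains
in the finite poset `α`. -/
noncomputable def aMax (α : Type*) [PartialOrder α] [Fintype α] [DecidableEq α] (k : ℕ) : ℕ :=
  sSup {n : ℕ | ∃ f : Fin k → Finset α,
    (∀ i, IsAntichain (· ≤ ·) (↑(f i) : Set α)) ∧
    Pairwise (Function.onFun Disjoint f) ∧
    n = (Finset.univ.biUnion f).card}

/-- The `k`-th row length of the Greene shape `λ(α)`. -/
noncomputable def lam (α : Type*) [PartialOrder α] [Fintype α] [DecidableEq α] (k : ℕ) : ℕ :=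
  cMax α k - cMax α (k - 1)

/-- The `k`-th column length of the Greene shape, `μ_k = a_k - a_{k-1}`. -/
noncomputable def mu (α : Type*) [PartialOrder α] [Fintype α] [DecidableEq α] (k : ℕ) : ℕ :=
  aMax α k - aMax α (k - 1)

/-! ### Auxiliary machinery -/

open scoped Classical in
/-- weighted height function: `hstar m x` is the maximal `m`-weight of a chain ending at `x`. -/
noncomputable def hstar {α : Type*} [PartialOrder α] [Fintype α]
    (m : α → ℕ) (x : α) : ℕ :=
  m x + ((Finset.univ.filter fun y => y < x).attach.sup fun y => hstar m y.1)
termination_by (Finset.univ.filter fun y => y < x).card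
decreasing_by
  have hy : y.1 < x := (Finset.mem_filter.mp y.2).2
  apply Finset.card_lt_card
  constructor
  · intro z hz
    rcases Finset.mem_filter.mp hz with ⟨_, hzy⟩
    exact Finset.mem_filter.mpr ⟨Finset.mem_univ _, hzy.trans hy⟩
  · intro hsub
    have := hsub (Finset.mem_filter.mpr ⟨Finset.mem_univ _, hy⟩)
    exact absurd (Finset.mem_filter.mp this).2 (lt_irrefl _)

section HStar
variable {α : Type*} [PartialOrder α] [Fintype α] (m : α → ℕ)

lemma le_hstar (x : α) : m x ≤ hstar m x := by
  rw [hstar]; exact Nat.le_add_right _ _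

lemma hstar_add_le {x y : α} (h : y < x) : hstar m y + m x ≤ hstar m x := by
  classical
  conv_rhs => rw [hstar]
  have hy : y ∈ Finset.univ.filter (fun z => z < x) := by
    simp [h]
  have := Finset.le_sup (f := fun z : {z // z ∈ Finset.univ.filter (fun z => z < x)} => hstar m z.1)
    (Finset.mem_attach _ ⟨y, hy⟩)
  dsimp only at this
  omega

lemma hstar_min {x : α} (hx : ∀ y : α, y ≤ x → y = x) : hstar m x = m x := by
  classical
  rw [hstar]
  have : (Finset.univ.filter fun y => y < x) = ∅ := by
    ext z; simp only [Finset.mem_filter, Finset.mem_univ, true_and, Finset.notMem_empty,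
      iff_false]
    intro hz
    exact absurd (hx z hz.le) (ne_of_lt hz)
  rw [this]
  simp

lemma hstar_le (φ : α → ℕ) (hφ1 : ∀ x, m x ≤ φ x)
    (hφ2 : ∀ x y, y < x → φ y + m x ≤ φ x) : ∀ x, hstar m x ≤ φ x := by
  classical
  have wf : WellFounded ((· < ·) : α → α → Prop) := (Finite.to_wellFoundedLT).wf
  intro x
  induction x using wf.induction with
  | _ x ih =>
    rw [hstar]
    have hsup : ((Finset.univ.filter fun y => y < x).attach.sup fun y => hstar m y.1)
        ≤ φ x - m x := by
      apply Finset.sup_le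
      rintro ⟨y, hy⟩ -
      have hyx : y < x := (Finset.mem_filter.mp hy).2
      have h1 := ih y hyx
      have h2 := hφ2 x y hyx
      dsimp only
      omega
    have := hφ1 x
    omega

end HStar

lemma count_one (k s : ℕ) (h1 : 1 ≤ s) (h2 : s ≤ 2*k+1) :
    ((Finset.univ : Finset (Fin (k+1))).filter (fun i => 2*i.1+1 = s)).card
    + ((Finset.univ : Finset (Fin k)).filter (fun j => 2*j.1+2 = s)).card = 1 := by
  rcases Nat.even_or_odd s with ⟨t, ht⟩ | ⟨t, ht⟩
  · have ht1 : 1 ≤ t := by omega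
    have htk : t ≤ k := by omega
    have e1 : ((Finset.univ : Finset (Fin (k+1))).filter (fun i => 2*i.1+1 = s)) = ∅ := by
      ext i; simp only [Finset.mem_filter, Finset.mem_univ, true_and, Finset.notMem_empty,
        iff_false]; omega
    have e2 : ((Finset.univ : Finset (Fin k)).filter (fun j => 2*j.1+2 = s))
        = {(⟨t-1, by omega⟩ : Fin k)} := by
      ext j; simp only [Finset.mem_filter, Finset.mem_univ, true_and, Finset.mem_singleton,
        Fin.ext_iff]; omega
    rw [e1, e2]; simp
  · have htk : t ≤ k := by omega
    have e1 : ((Finset.univ : Finset (Fin (k+1))).filter (fun i => 2*i.1+1 = s))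
        = {(⟨t, by omega⟩ : Fin (k+1))} := by
      ext i; simp only [Finset.mem_filter, Finset.mem_univ, true_and, Finset.mem_singleton,
        Fin.ext_iff]; omega
    have e2 : ((Finset.univ : Finset (Fin k)).filter (fun j => 2*j.1+2 = s)) = ∅ := by
      ext j; simp only [Finset.mem_filter, Finset.mem_univ, true_and, Finset.notMem_empty,
        iff_false]; omega
    rw [e1, e2]; simp

lemma occ_sum (k h mm : ℕ) (h1 : 1 ≤ mm) (h2 : mm ≤ h) (h3 : h ≤ 2*k+1) :
    ((Finset.univ : Finset (Fin (k+1))).filter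
      (fun i => 2*i.1+1 ∈ Finset.Ioc (h - mm) h)).card
    + ((Finset.univ : Finset (Fin k)).filter
      (fun j => 2*j.1+2 ∈ Finset.Ioc (h - mm) h)).card = mm := by
  rw [Finset.card_filter, Finset.card_filter]
  have key : ∀ (t : ℕ), (if t ∈ Finset.Ioc (h-mm) h then (1:ℕ) else 0)
      = ∑ s ∈ Finset.Ioc (h-mm) h, if t = s then 1 else 0 := by
    intro t
    rw [Finset.sum_ite_eq]
  simp_rw [key]
  rw [Finset.sum_comm, Finset.sum_comm (s := (Finset.univ : Finset (Fin k)))]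
  rw [← Finset.sum_add_distrib]
  have congrg : ∀ s ∈ Finset.Ioc (h-mm) h,
      ((∑ i : Fin (k+1), if 2*i.1+1 = s then (1:ℕ) else 0)
        + ∑ j : Fin k, if 2*j.1+2 = s then (1:ℕ) else 0) = 1 := by
    intro s hs
    rw [Finset.mem_Ioc] at hs
    rw [← Finset.card_filter, ← Finset.card_filter]
    exact count_one k s (by omega) (by omega)
  rw [Finset.sum_congr rfl congrg, Finset.sum_const, smul_eq_mul, mul_one, Nat.card_Ioc]
  omega

section AMax
variable (α : Type*) [PartialOrder α] [Fintype α] [DecidableEq α]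

lemma aMax_bddAbove (k : ℕ) : BddAbove {n : ℕ | ∃ f : Fin k → Finset α,
    (∀ i, IsAntichain (· ≤ ·) (↑(f i) : Set α)) ∧
    Pairwise (Function.onFun Disjoint f) ∧
    n = (Finset.univ.biUnion f).card} := by
  refine ⟨Fintype.card α, ?_⟩
  rintro n ⟨f, -, -, rfl⟩
  exact Finset.card_le_card (Finset.subset_univ _)

lemma aMax_exists (k : ℕ) : ∃ f : Fin k → Finset α,
    (∀ i, IsAntichain (· ≤ ·) (↑(f i) : Set α)) ∧
    Pairwise (Function.onFun Disjoint f) ∧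
    (Finset.univ.biUnion f).card = aMax α k := by
  have hne : {n : ℕ | ∃ f : Fin k → Finset α,
      (∀ i, IsAntichain (· ≤ ·) (↑(f i) : Set α)) ∧
      Pairwise (Function.onFun Disjoint f) ∧
      n = (Finset.univ.biUnion f).card}.Nonempty := by
    refine ⟨0, fun _ => ∅, ?_, ?_, ?_⟩
    · intro i
      simp only [Finset.coe_empty]
      exact Set.subsingleton_empty.isAntichain _
    · intro i j _
      exact disjoint_bot_left
    · symm
      rw [Finset.card_eq_zero]
      ext x
      simp
  obtain ⟨f, hf1, hf2, hf3⟩ := Nat.sSup_mem hne (aMax_bddAbove α k)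
  exact ⟨f, hf1, hf2, hf3.symm⟩

lemma le_aMax (k : ℕ) (f : Fin k → Finset α)
    (h1 : ∀ i, IsAntichain (· ≤ ·) (↑(f i) : Set α))
    (h2 : Pairwise (Function.onFun Disjoint f)) :
    (Finset.univ.biUnion f).card ≤ aMax α k :=
  le_csSup (aMax_bddAbove α k) ⟨f, h1, h2, rfl⟩

end AMax

lemma step_covering (α : Type*) [PartialOrder α] [Fintype α] [DecidableEq α]
    (p : α) (hp : ∀ x : α, x ≤ p → x = p) (k : ℕ)
    (hcov : ∀ f : Fin k → Finset α,
      (∀ i, IsAntichain (· ≤ ·) (↑(f i) : Set α)) →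
      Pairwise (Function.onFun Disjoint f) →
      (Finset.univ.biUnion f).card = aMax α k →
      p ∈ Finset.univ.biUnion f) :
    ∀ f : Fin (k+1) → Finset α,
      (∀ i, IsAntichain (· ≤ ·) (↑(f i) : Set α)) →
      Pairwise (Function.onFun Disjoint f) →
      (Finset.univ.biUnion f).card = aMax α (k+1) →
      p ∈ Finset.univ.biUnion f := by
  classical
  intro F hFa hFd hFcard
  by_contra hpF
  obtain ⟨G, hGa, hGd, hGcard⟩ := aMax_exists α k
  have hpG : p ∈ Finset.univ.biUnion G := hcov G hGa hGd hGcard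
  set X := Finset.univ.biUnion F with hX
  set Y := Finset.univ.biUnion G with hY
  set Z := X ∪ Y with hZ
  set m : α → ℕ := fun x => (if x ∈ X then 1 else 0) + (if x ∈ Y then 1 else 0) with hm
  have hmle : ∀ x, m x ≤ hstar m x := le_hstar m
  have hm2 : ∀ x, m x ≤ 2 := by
    intro x; simp only [hm]; split_ifs <;> omega
  have hmZ : ∀ x ∈ Z, 1 ≤ m x := by
    intro x hx
    rcases Finset.mem_union.mp hx with hx | hx <;> simp only [hm] <;> split_ifs <;> omega
  -- the upper bound on hstar
  have hub : ∀ x : α, hstar m x ≤ 2*k+1 := by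
    set φ : α → ℕ := fun x =>
      ((Finset.univ : Finset (Fin (k+1))).filter (fun i => ∃ z ∈ F i, z ≤ x)).card
      + ((Finset.univ : Finset (Fin k)).filter (fun j => ∃ z ∈ G j, z ≤ x)).card with hφ
    have hcomp : ∀ {n : ℕ} (Fam : Fin n → Finset α),
        (∀ i, IsAntichain (· ≤ ·) (↑(Fam i) : Set α)) → ∀ {x y : α}, y < x →
        ((Finset.univ : Finset (Fin n)).filter (fun i => ∃ z ∈ Fam i, z ≤ y)).card
          + (if x ∈ Finset.univ.biUnion Fam then 1 else 0)
          ≤ ((Finset.univ : Finset (Fin n)).filter (fun i => ∃ z ∈ Fam i, z ≤ x)).card := by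
      intro n Fam hanti x y hyx
      have hsub : (Finset.univ : Finset (Fin n)).filter (fun i => ∃ z ∈ Fam i, z ≤ y)
          ⊆ (Finset.univ : Finset (Fin n)).filter (fun i => ∃ z ∈ Fam i, z ≤ x) := by
        intro i hi
        rcases Finset.mem_filter.mp hi with ⟨-, z, hz, hzy⟩
        exact Finset.mem_filter.mpr ⟨Finset.mem_univ _, z, hz, hzy.trans hyx.le⟩
      by_cases hx : x ∈ Finset.univ.biUnion Fam
      · rcases Finset.mem_biUnion.mp hx with ⟨i₀, -, hi₀⟩
        have h1 : i₀ ∉ (Finset.univ : Finset (Fin n)).filter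
            (fun i => ∃ z ∈ Fam i, z ≤ y) := by
          intro hmem
          rcases Finset.mem_filter.mp hmem with ⟨-, z, hz, hzy⟩
          have hzx : z < x := lt_of_le_of_lt hzy hyx
          exact hanti i₀ hz hi₀ (ne_of_lt hzx) hzx.le
        have h2 : insert i₀ ((Finset.univ : Finset (Fin n)).filter
              (fun i => ∃ z ∈ Fam i, z ≤ y))
            ⊆ (Finset.univ : Finset (Fin n)).filter (fun i => ∃ z ∈ Fam i, z ≤ x) := by
          intro i hi
          rcases Finset.mem_insert.mp hi with rfl | hi
          · exact Finset.mem_filter.mpr ⟨Finset.mem_univ _, x, hi₀, le_refl x⟩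
          · exact hsub hi
        have h3 := Finset.card_le_card h2
        rw [Finset.card_insert_of_notMem h1] at h3
        simp only [hx, if_true]
        omega
      · simp only [hx, if_false]
        simpa using Finset.card_le_card hsub
    have hb := hstar_le m φ ?_ ?_
    · intro x
      calc hstar m x ≤ φ x := hb x
        _ ≤ (k+1) + k := by
          apply Nat.add_le_add
          · exact (Finset.card_filter_le _ _).trans (by simp)
          · exact (Finset.card_filter_le _ _).trans (by simp)
        _ ≤ 2*k+1 := by omega
    · -- m x ≤ φ x
      intro x
      simp only [hm, hφ]
      apply Nat.add_le_add
      · by_cases hx : x ∈ X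
        · rcases Finset.mem_biUnion.mp hx with ⟨i₀, -, hi₀⟩
          simp only [hx, if_true]
          refine Finset.card_pos.mpr ⟨i₀, ?_⟩
          exact Finset.mem_filter.mpr ⟨Finset.mem_univ _, x, hi₀, le_refl x⟩
        · simp [hx]
      · by_cases hx : x ∈ Y
        · rcases Finset.mem_biUnion.mp hx with ⟨j₀, -, hj₀⟩
          simp only [hx, if_true]
          refine Finset.card_pos.mpr ⟨j₀, ?_⟩
          exact Finset.mem_filter.mpr ⟨Finset.mem_univ _, x, hj₀, le_refl x⟩
        · simp [hx]
    · -- φ y + m x ≤ φ x for y < x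
      intro x y hyx
      have hF' := hcomp F hFa hyx
      have hG' := hcomp G hGa hyx
      rw [← hX] at hF'
      rw [← hY] at hG'
      simp only [hm, hφ]
      by_cases hx1 : x ∈ X <;> by_cases hx2 : x ∈ Y <;>
        simp only [hx1, hx2, if_true, if_false] at hF' hG' ⊢ <;> omega
  -- slot families
  set Fs : Fin (k+1) → Finset α := fun i =>
    Z.filter (fun x => 2*i.1+1 ∈ Finset.Ioc (hstar m x - m x) (hstar m x)) with hFs
  set Gs : Fin k → Finset α := fun j =>
    Z.filter (fun x => 2*j.1+2 ∈ Finset.Ioc (hstar m x - m x) (hstar m x)) with hGs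
  have hanti : ∀ s : ℕ, IsAntichain (· ≤ ·)
      (↑(Z.filter (fun x => s ∈ Finset.Ioc (hstar m x - m x) (hstar m x))) : Set α) := by
    intro s a ha b hb hne hle
    rw [Finset.mem_coe, Finset.mem_filter, Finset.mem_Ioc] at ha hb
    have hab : a < b := lt_of_le_of_ne hle hne
    have h1 := hstar_add_le m hab
    have h2 := hmle b
    obtain ⟨-, ha1, ha2⟩ := ha
    obtain ⟨-, hb1, hb2⟩ := hb
    omega
  have hFsa : ∀ i, IsAntichain (· ≤ ·) (↑(Fs i) : Set α) := by
    intro i; rw [hFs]; exact hanti _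
  have hGsa : ∀ j, IsAntichain (· ≤ ·) (↑(Gs j) : Set α) := by
    intro j; rw [hGs]; exact hanti _
  have hFsd : Pairwise (Function.onFun Disjoint Fs) := by
    intro i i' hne
    have hne' : i.1 ≠ i'.1 := fun h => hne (Fin.ext h)
    simp only [Function.onFun, hFs]
    rw [Finset.disjoint_left]
    intro x hx hx'
    rw [Finset.mem_filter, Finset.mem_Ioc] at hx hx'
    have h1 := hm2 x
    have h2 := hmle x
    obtain ⟨-, hx1, hx2⟩ := hx
    obtain ⟨-, hx1', hx2'⟩ := hx'
    omega
  have hGsd : Pairwise (Function.onFun Disjoint Gs) := by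
    intro j j' hne
    have hne' : j.1 ≠ j'.1 := fun h => hne (Fin.ext h)
    simp only [Function.onFun, hGs]
    rw [Finset.disjoint_left]
    intro x hx hx'
    rw [Finset.mem_filter, Finset.mem_Ioc] at hx hx'
    have h1 := hm2 x
    have h2 := hmle x
    obtain ⟨-, hx1, hx2⟩ := hx
    obtain ⟨-, hx1', hx2'⟩ := hx'
    omega
  -- counting
  have e1 : ∑ i : Fin (k+1), (Fs i).card = ∑ x ∈ Z,
      ((Finset.univ : Finset (Fin (k+1))).filter
        (fun i => 2*i.1+1 ∈ Finset.Ioc (hstar m x - m x) (hstar m x))).card := by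
    simp only [hFs, Finset.card_filter]
    rw [Finset.sum_comm]
  have e2 : ∑ j : Fin k, (Gs j).card = ∑ x ∈ Z,
      ((Finset.univ : Finset (Fin k)).filter
        (fun j => 2*j.1+2 ∈ Finset.Ioc (hstar m x - m x) (hstar m x))).card := by
    simp only [hGs, Finset.card_filter]
    rw [Finset.sum_comm]
  have e3 : ∀ x ∈ Z,
      ((Finset.univ : Finset (Fin (k+1))).filter
        (fun i => 2*i.1+1 ∈ Finset.Ioc (hstar m x - m x) (hstar m x))).card
      + ((Finset.univ : Finset (Fin k)).filter
        (fun j => 2*j.1+2 ∈ Finset.Ioc (hstar m x - m x) (hstar m x))).card = m x := by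
    intro x hx
    exact occ_sum k (hstar m x) (m x) (hmZ x hx) (hmle x) (hub x)
  have e4 : ∑ x ∈ Z, m x = X.card + Y.card := by
    simp only [hm]
    rw [Finset.sum_add_distrib]
    congr 1
    · rw [← Finset.card_filter, Finset.filter_mem_eq_inter,
        Finset.inter_eq_right.mpr Finset.subset_union_left]
    · rw [← Finset.card_filter, Finset.filter_mem_eq_inter,
        Finset.inter_eq_right.mpr Finset.subset_union_right]
  have hcards : (Finset.univ.biUnion Fs).card + (Finset.univ.biUnion Gs).card
      = aMax α (k+1) + aMax α k := by
    rw [Finset.card_biUnion (fun i _ i' _ hne => hFsd hne),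
      Finset.card_biUnion (fun j _ j' _ hne => hGsd hne)]
    rw [e1, e2, ← Finset.sum_add_distrib, Finset.sum_congr rfl e3, e4, hFcard, hGcard]
  have hle1 : (Finset.univ.biUnion Fs).card ≤ aMax α (k+1) := le_aMax α (k+1) Fs hFsa hFsd
  have hle2 : (Finset.univ.biUnion Gs).card ≤ aMax α k := le_aMax α k Gs hGsa hGsd
  have hGscard : (Finset.univ.biUnion Gs).card = aMax α k := by omega
  have hpGs := hcov Gs hGsa hGsd hGscard
  rcases Finset.mem_biUnion.mp hpGs with ⟨j, -, hj⟩
  rw [hGs] at hj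
  rw [Finset.mem_filter, Finset.mem_Ioc] at hj
  have hpm : m p = 1 := by
    simp only [hm]
    rw [if_neg hpF, if_pos hpG]
  have hps : hstar m p = 1 := by rw [hstar_min m hp, hpm]
  obtain ⟨-, -, hj2⟩ := hj
  omega

theorem maximal_antichain_families_keep_covering
    (α : Type*) [PartialOrder α] [Fintype α] [DecidableEq α]
    (p : α) (hp : ∀ x : α, x ≤ p → x = p) (k : ℕ)
    (hcov : ∀ f : Fin k → Finset α,
      (∀ i, IsAntichain (· ≤ ·) (↑(f i) : Set α)) →
      Pairwise (Function.onFun Disjoint f) →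
      (Finset.univ.biUnion f).card = aMax α k →
      p ∈ Finset.univ.biUnion f) :
    ∀ k' : ℕ, k ≤ k' → ∀ f : Fin k' → Finset α,
      (∀ i, IsAntichain (· ≤ ·) (↑(f i) : Set α)) →
      Pairwise (Function.onFun Disjoint f) →
      (Finset.univ.biUnion f).card = aMax α k' →
      p ∈ Finset.univ.biUnion f := by
  intro k' hk'
  induction k', hk' using Nat.le_induction with
  | base => exact hcov
  | succ n hn ih => exact step_covering α p hp n ih
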